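/- Let * be a continuous t-norm, T an algebra of truth values for *, and L = Taut(T,*) the real-valued logic induced by (T,*). Then L satisfies principle P1 if and only if L extends Gödel logic, i.e. Taut([0,1],min) ⊆ L. -/

import Mathlib

open Set

noncomputable section

/-- The real unit interval `[0,1]` as a subset of `ℝ`. -/
def I01 : Set ℝ := Set.Icc 0 1

/-- A continuous t-norm on `[0,1]`. -/
structure ContTNorm where
  mul : ℝ → ℝ → ℝ
  maps_to : ∀ x ∈ I01, ∀ y ∈ I01, mul x y ∈ I01
  continuousOn : ContinuousOn (fun p : ℝ × ℝ => mul p.1 p.2) (I01 ×ˢ I01)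
  assoc : ∀ x ∈ I01, ∀ y ∈ I01, ∀ z ∈ I01, mul (mul x y) z = mul x (mul y z)
  comm : ∀ x ∈ I01, ∀ y ∈ I01, mul x y = mul y x
  mono : ∀ a ∈ I01, ∀ b ∈ I01, ∀ c ∈ I01, b ≤ c → mul a b ≤ mul a c
  one_mul' : ∀ x ∈ I01, mul 1 x = x

/-- The residuum of a t-norm: `x →* y := sup { c ∈ [0,1] | x * c ≤ y }`. -/
def resid (t : ContTNorm) (x y : ℝ) : ℝ :=
  sSup {c | c ∈ I01 ∧ t.mul x c ≤ y}

/-- An algebra of truth values for the t-norm `t`: a subset of `[0,1]` containing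
`0` and `1` and closed under `t.mul` and its residuum. -/
structure TruthAlg (t : ContTNorm) where
  carrier : Set ℝ
  subset : carrier ⊆ I01
  zero_mem : (0:ℝ) ∈ carrier
  one_mem : (1:ℝ) ∈ carrier
  mul_mem : ∀ x ∈ carrier, ∀ y ∈ carrier, t.mul x y ∈ carrier
  resid_mem : ∀ x ∈ carrier, ∀ y ∈ carrier, resid t x y ∈ carrier

/-- Propositional formulas over countably many variables with `&`, `→`, `⊥`. -/
inductive Formula : Type
  | var : ℕ → Formula
  | bot : Formula
  | conj : Formula → Formula → Formula
  | impl : Formula → Formula → Formula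

/-- `α ↔ β := (α → β) & (β → α)`. -/
def Formula.iff (a b : Formula) : Formula := .conj (.impl a b) (.impl b a)

/-- The valuation determined by an assignment `v` of reals to the variables. -/
def eval (t : ContTNorm) (v : ℕ → ℝ) : Formula → ℝ
  | .var i => v i
  | .bot => 0
  | .conj a b => t.mul (eval t v a) (eval t v b)
  | .impl a b => resid t (eval t v a) (eval t v b)

/-- A valuation into `(T, t)` is (identified with) an assignment of values of `T`
to the propositional variables. -/
def IsValuation (t : ContTNorm) (T : TruthAlg t) (v : ℕ → ℝ) : Prop :=
  ∀ i, v i ∈ T.carrier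

/-- The logic induced by `(T, t)`: all formulas true to degree 1 under every valuation. -/
def Taut (t : ContTNorm) (T : TruthAlg t) : Set Formula :=
  {α | ∀ v : ℕ → ℝ, IsValuation t T v → eval t v α = 1}

/-- Principle P1. -/
def P1 (L : Set Formula) : Prop :=
  ∀ (t : ContTNorm) (T : TruthAlg t), Taut t T = L →
    ∀ α β : Formula,
      (Formula.iff α β ∈ L ↔
        ∀ v : ℕ → ℝ, IsValuation t T v → (eval t v α = 1 ↔ eval t v β = 1))

/-- Principle P2. -/
def P2 (L : Set Formula) : Prop :=
  ∀ (t : ContTNorm) (T : TruthAlg t), Taut t T = L →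
    ∀ v w : ℕ → ℝ, IsValuation t T v → IsValuation t T w → v ≠ w →
      ∃ α : Formula, 0 < eval t v α ∧ eval t w α = 0

/-- The Gödel t-norm: minimum. -/
def minT : ContTNorm where
  mul := fun x y => min x y
  maps_to := by
    rintro x ⟨hx0, hx1⟩ y ⟨hy0, hy1⟩
    exact ⟨le_min hx0 hy0, min_le_of_left_le hx1⟩
  continuousOn := (continuous_fst.min continuous_snd).continuousOn
  assoc := fun x _ y _ z _ => min_assoc x y z
  comm := fun x _ y _ => min_comm x y
  mono := fun a _ b _ c _ h => min_le_min le_rfl h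
  one_mul' := by rintro x ⟨hx0, hx1⟩; exact min_eq_right hx1

/-- The Łukasiewicz t-norm: `x ⊙ y = max 0 (x + y - 1)`. -/
def lukT : ContTNorm where
  mul := fun x y => max 0 (x + y - 1)
  maps_to := by
    rintro x ⟨hx0, hx1⟩ y ⟨hy0, hy1⟩
    exact ⟨le_max_left _ _, max_le zero_le_one (by linarith)⟩
  continuousOn :=
    (continuous_const.max ((continuous_fst.add continuous_snd).sub continuous_const)).continuousOn
  assoc := by
    rintro x ⟨hx0, hx1⟩ y ⟨hy0, hy1⟩ z ⟨hz0, hz1⟩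
    simp only [max_def]
    split_ifs <;> linarith
  comm := by intro x _ y _; rw [add_comm]
  mono := by
    rintro a _ b _ c _ h
    exact max_le_max le_rfl (by linarith)
  one_mul' := by
    rintro x ⟨hx0, hx1⟩
    rw [show (1:ℝ) + x - 1 = x by ring, max_eq_right hx0]

/-- The product t-norm: ordinary multiplication. -/
def prodT : ContTNorm where
  mul := fun x y => x * y
  maps_to := by
    rintro x ⟨hx0, hx1⟩ y ⟨hy0, hy1⟩
    exact ⟨mul_nonneg hx0 hy0, by nlinarith⟩
  continuousOn := (continuous_fst.mul continuous_snd).continuousOn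
  assoc := fun x _ y _ z _ => mul_assoc x y z
  comm := fun x _ y _ => mul_comm x y
  mono := by rintro a ⟨ha0, _⟩ b _ c _ h; exact mul_le_mul_of_nonneg_left h ha0
  one_mul' := fun x _ => one_mul x

lemma ContTNorm.mul_zero' (t : ContTNorm) {x : ℝ} (hx : x ∈ I01) : t.mul x 0 = 0 := by
  have h01 : (0:ℝ) ∈ I01 := ⟨le_rfl, zero_le_one⟩
  have h11 : (1:ℝ) ∈ I01 := ⟨zero_le_one, le_rfl⟩
  have h1 : t.mul x 0 = t.mul 0 x := t.comm x hx 0 h01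
  have h2 : t.mul 0 x ≤ t.mul 0 1 := t.mono 0 h01 x hx 1 h11 hx.2
  have h3 : t.mul 0 1 = t.mul 1 0 := t.comm 0 h01 1 h11
  have h4 : t.mul 1 0 = 0 := t.one_mul' 0 h01
  have h5 : t.mul x 0 ∈ I01 := t.maps_to x hx 0 h01
  rw [h3, h4] at h2
  rw [h1] at h5 ⊢
  exact le_antisymm h2 h5.1

lemma resid_mem_I01 (t : ContTNorm) {x y : ℝ} (hx : x ∈ I01) (hy : y ∈ I01) :
    resid t x y ∈ I01 := by
  have h01 : (0:ℝ) ∈ I01 := ⟨le_rfl, zero_le_one⟩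
  have h0 : (0:ℝ) ∈ {c | c ∈ I01 ∧ t.mul x c ≤ y} :=
    ⟨h01, by rw [t.mul_zero' hx]; exact hy.1⟩
  have hbdd : BddAbove {c | c ∈ I01 ∧ t.mul x c ≤ y} := ⟨1, fun c hc => hc.1.2⟩
  constructor
  · exact le_csSup hbdd h0
  · exact csSup_le ⟨0, h0⟩ fun c hc => hc.1.2

/-- The full algebra of truth values `[0,1]` for a t-norm `t`. -/
def fullAlg (t : ContTNorm) : TruthAlg t where
  carrier := I01
  subset := le_rfl
  zero_mem := ⟨le_rfl, zero_le_one⟩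
  one_mem := ⟨zero_le_one, le_rfl⟩
  mul_mem := t.maps_to
  resid_mem := fun _ hx _ hy => resid_mem_I01 t hx hy

lemma resid_eq_one_of_le (t : ContTNorm) {x y : ℝ} (hx : x ∈ I01) (hy : y ∈ I01)
    (hxy : x ≤ y) : resid t x y = 1 := by
  have h11 : (1:ℝ) ∈ I01 := ⟨zero_le_one, le_rfl⟩
  have hmul : t.mul x 1 = x := by rw [t.comm x hx 1 h11]; exact t.one_mul' x hx
  have h1 : (1:ℝ) ∈ {c | c ∈ I01 ∧ t.mul x c ≤ y} := ⟨h11, by rw [hmul]; exact hxy⟩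
  have hbdd : BddAbove {c | c ∈ I01 ∧ t.mul x c ≤ y} := ⟨1, fun c hc => hc.1.2⟩
  exact le_antisymm (csSup_le ⟨1, h1⟩ fun c hc => hc.1.2) (le_csSup hbdd h1)

lemma resid_one_zero (t : ContTNorm) : resid t 1 0 = 0 := by
  have : {c | c ∈ I01 ∧ t.mul 1 c ≤ 0} = {0} := by
    ext c
    constructor
    · rintro ⟨hc, hle⟩
      have := t.one_mul' c hc
      have := hc.1
      simp only [Set.mem_singleton_iff]
      linarith [this, (t.one_mul' c hc) ▸ hle]
    · rintro rfl
      exact ⟨⟨le_rfl, zero_le_one⟩, by rw [t.mul_zero' ⟨zero_le_one, le_rfl⟩]⟩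
  rw [resid, this, csSup_singleton]

/-- The two-element algebra of truth values `{0,1}`. -/
def boolAlg (t : ContTNorm) : TruthAlg t where
  carrier := {0, 1}
  subset := by
    rintro x (rfl | rfl)
    · exact ⟨le_rfl, zero_le_one⟩
    · exact ⟨zero_le_one, le_rfl⟩
  zero_mem := Or.inl rfl
  one_mem := Or.inr rfl
  mul_mem := by
    have h01 : (0:ℝ) ∈ I01 := ⟨le_rfl, zero_le_one⟩
    have h11 : (1:ℝ) ∈ I01 := ⟨zero_le_one, le_rfl⟩
    rintro x (rfl | rfl) y (rfl | rfl)
    · exact Or.inl (t.mul_zero' h01)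
    · exact Or.inl (by rw [t.comm 0 h01 1 h11]; exact t.mul_zero' h11)
    · exact Or.inl (t.mul_zero' h11)
    · exact Or.inr (t.one_mul' 1 h11)
  resid_mem := by
    have h01 : (0:ℝ) ∈ I01 := ⟨le_rfl, zero_le_one⟩
    have h11 : (1:ℝ) ∈ I01 := ⟨zero_le_one, le_rfl⟩
    rintro x (rfl | rfl) y (rfl | rfl)
    · exact Or.inr (resid_eq_one_of_le t h01 h01 le_rfl)
    · exact Or.inr (resid_eq_one_of_le t h01 h11 zero_le_one)
    · exact Or.inl (resid_one_zero t)
    · exact Or.inr (resid_eq_one_of_le t h11 h11 le_rfl)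

/-- Classical logic: the logic induced by the two-element algebra `{0,1}`
(this is independent of the chosen continuous t-norm). -/
def ClassicalLogic : Set Formula := Taut minT (boolAlg minT)


section Aux

lemma mem0I : (0:ℝ) ∈ I01 := ⟨le_rfl, zero_le_one⟩
lemma mem1I : (1:ℝ) ∈ I01 := ⟨zero_le_one, le_rfl⟩

lemma ContTNorm.mul_one'' (t : ContTNorm) {x : ℝ} (hx : x ∈ I01) : t.mul x 1 = x := by
  rw [t.comm x hx 1 mem1I, t.one_mul' x hx]

lemma mul_le_left' (t : ContTNorm) {x y : ℝ} (hx : x ∈ I01) (hy : y ∈ I01) :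
    t.mul x y ≤ x := by
  have h := t.mono x hx y hy 1 mem1I hy.2
  rwa [t.mul_one'' hx] at h

lemma tnorm_mul_eq_one (t : ContTNorm) {x y : ℝ} (hx : x ∈ I01) (hy : y ∈ I01)
    (h : t.mul x y = 1) : x = 1 ∧ y = 1 := by
  have h1 : t.mul x y ≤ x := mul_le_left' t hx hy
  have h2 : t.mul x y ≤ y := by
    rw [t.comm x hx y hy]; exact mul_le_left' t hy hx
  rw [h] at h1 h2
  exact ⟨le_antisymm hx.2 h1, le_antisymm hy.2 h2⟩

lemma contOn_mul_left (t : ContTNorm) {x : ℝ} (hx : x ∈ I01) :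
    ContinuousOn (fun c => t.mul x c) I01 := by
  have heq : (fun c => t.mul x c) = (fun p : ℝ × ℝ => t.mul p.1 p.2) ∘ (fun c => (x, c)) := rfl
  rw [heq]
  exact t.continuousOn.comp (Continuous.continuousOn (by continuity))
    (fun c hc => Set.mk_mem_prod hx hc)

lemma mul_resid_le (t : ContTNorm) {x y : ℝ} (hx : x ∈ I01) (hy0 : 0 ≤ y) :
    t.mul x (resid t x y) ≤ y := by
  set S := {c | c ∈ I01 ∧ t.mul x c ≤ y} with hS
  have hne : S.Nonempty := ⟨0, mem0I, by rw [t.mul_zero' hx]; exact hy0⟩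
  have hbdd : BddAbove S := ⟨1, fun c hc => hc.1.2⟩
  have hproj : ∀ c : ℝ, max 0 (min 1 c) ∈ I01 := fun c =>
    ⟨le_max_left _ _, max_le zero_le_one (min_le_left _ _)⟩
  have hg : Continuous fun c => t.mul x (max 0 (min 1 c)) := by
    rw [← continuousOn_univ]
    exact (contOn_mul_left t hx).comp
      (Continuous.continuousOn (continuous_const.max (continuous_const.min continuous_id)))
      (fun c _ => hproj c)
  have hSeq : S = Set.Icc (0:ℝ) 1 ∩ {c | t.mul x (max 0 (min 1 c)) ≤ y} := by
    ext c
    simp only [hS, Set.mem_setOf_eq, Set.mem_inter_iff, I01, Set.mem_Icc]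
    constructor
    · rintro ⟨hc, hle⟩
      refine ⟨hc, ?_⟩
      rwa [min_eq_right hc.2, max_eq_right hc.1]
    · rintro ⟨hc, hle⟩
      refine ⟨hc, ?_⟩
      rwa [min_eq_right hc.2, max_eq_right hc.1] at hle
  have hclosed : IsClosed S := by
    rw [hSeq]
    exact isClosed_Icc.inter (isClosed_le hg continuous_const)
  have hmem : sSup S ∈ S := hclosed.csSup_mem hne hbdd
  exact hmem.2

lemma le_of_resid_eq_one (t : ContTNorm) {x y : ℝ} (hx : x ∈ I01) (hy0 : 0 ≤ y)
    (h : resid t x y = 1) : x ≤ y := by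
  have h2 := mul_resid_le t hx hy0
  rwa [h, t.mul_one'' hx] at h2

lemma idem_mul (t : ContTNorm) {x c : ℝ} (hx : x ∈ I01) (hc : c ∈ I01)
    (hid : t.mul x x = x) : t.mul x c = min x c := by
  rcases le_total c x with h | h
  · rw [min_eq_right h]
    have hub : t.mul x c ≤ c := by
      rw [t.comm x hx c hc]; exact mul_le_left' t hc hx
    have hsub : Set.Icc (t.mul x 0) (t.mul x 1) ⊆ (fun z => t.mul x z) '' Set.Icc 0 1 :=
      intermediate_value_Icc zero_le_one (contOn_mul_left t hx)
    have hcmem : c ∈ Set.Icc (t.mul x 0) (t.mul x 1) := by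
      rw [t.mul_zero' hx, t.mul_one'' hx]; exact ⟨hc.1, h⟩
    obtain ⟨z, hz, hfz⟩ := hsub hcmem
    have hfz' : t.mul x z = c := hfz
    have hlb : t.mul x c = c := by
      calc t.mul x c = t.mul x (t.mul x z) := by rw [hfz']
        _ = t.mul (t.mul x x) z := (t.assoc x hx x hx z hz).symm
        _ = t.mul x z := by rw [hid]
        _ = c := hfz'
    exact hlb
  · rw [min_eq_left h]
    have h1 : t.mul x c ≤ x := mul_le_left' t hx hc
    have h2 : x ≤ t.mul x c := by
      have h3 := t.mono x hx x hx c hc h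
      rwa [hid] at h3
    linarith

lemma resid_idem (t : ContTNorm) {x y : ℝ} (hx : x ∈ I01) (hy : y ∈ I01)
    (hid : t.mul x x = x) : resid t x y = if x ≤ y then 1 else y := by
  split_ifs with hxy
  · exact resid_eq_one_of_le t hx hy hxy
  · push_neg at hxy
    have hset : {c | c ∈ I01 ∧ t.mul x c ≤ y} = Set.Icc 0 y := by
      ext c
      simp only [Set.mem_setOf_eq, Set.mem_Icc]
      constructor
      · rintro ⟨hc, hle⟩
        rw [idem_mul t hx hc hid] at hle
        refine ⟨hc.1, ?_⟩
        by_contra hcy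
        push_neg at hcy
        have hlt : y < min x c := lt_min hxy hcy
        linarith
      · rintro ⟨hc0, hcy⟩
        have hc : c ∈ I01 := ⟨hc0, hcy.trans hy.2⟩
        refine ⟨hc, ?_⟩
        rw [idem_mul t hx hc hid]
        exact min_le_of_right_le hcy
    rw [resid, hset, csSup_Icc hy.1]

lemma eval_mem (t : ContTNorm) (T : TruthAlg t) {v : ℕ → ℝ} (hv : IsValuation t T v) :
    ∀ γ : Formula, eval t v γ ∈ T.carrier := by
  intro γ
  induction γ with
  | var i => exact hv i
  | bot => exact T.zero_mem
  | conj a b iha ihb => exact T.mul_mem _ iha _ ihb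
  | impl a b iha ihb => exact T.resid_mem _ iha _ ihb

/-- The idempotency formula `X₀ ↔ X₀ & X₀`. -/
def idemForm : Formula := Formula.iff (.var 0) (.conj (.var 0) (.var 0))

lemma minT_mul_def (x y : ℝ) : minT.mul x y = min x y := rfl

lemma idemForm_godel : idemForm ∈ Taut minT (fullAlg minT) := by
  intro v hv
  have hx := hv 0
  simp only [idemForm, Formula.iff, eval]
  rw [minT_mul_def (v 0) (v 0), min_self,
    resid_eq_one_of_le minT hx hx le_rfl, minT_mul_def, min_self]

lemma idem_of_taut (t : ContTNorm) (T : TruthAlg t) (h : idemForm ∈ Taut t T) :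
    ∀ x ∈ T.carrier, t.mul x x = x := by
  intro x hx
  have hxI := T.subset hx
  have hv : IsValuation t T (fun _ => x) := fun _ => hx
  have he := h (fun _ => x) hv
  simp only [idemForm, Formula.iff, eval] at he
  have hmm := t.maps_to x hxI x hxI
  have hr1 := resid_mem_I01 t hxI hmm
  have hr2 := resid_mem_I01 t hmm hxI
  obtain ⟨h1, h2⟩ := tnorm_mul_eq_one t hr1 hr2 he
  have hle : x ≤ t.mul x x := le_of_resid_eq_one t hxI hmm.1 h1
  have hge : t.mul x x ≤ x := mul_le_left' t hxI hxI
  linarith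

lemma eval_eq_min (t : ContTNorm) (T : TruthAlg t)
    (hidem : ∀ x ∈ T.carrier, t.mul x x = x)
    {v : ℕ → ℝ} (hv : IsValuation t T v) (γ : Formula) :
    eval t v γ = eval minT v γ := by
  induction γ with
  | var i => rfl
  | bot => rfl
  | conj a b iha ihb =>
      have ha := eval_mem t T hv a
      have hb := eval_mem t T hv b
      show t.mul _ _ = minT.mul _ _
      rw [← iha, ← ihb, minT_mul_def]
      exact idem_mul t (T.subset ha) (T.subset hb) (hidem _ ha)
  | impl a b iha ihb =>
      have ha := eval_mem t T hv a
      have hb := eval_mem t T hv b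
      show resid t _ _ = resid minT _ _
      rw [← iha, ← ihb]
      rw [resid_idem t (T.subset ha) (T.subset hb) (hidem _ ha),
          resid_idem minT (T.subset ha) (T.subset hb) (by rw [minT_mul_def, min_self])]

/-- The collapsing map at threshold `b`. -/
def gmap (b z : ℝ) : ℝ := if b ≤ z then 1 else z

lemma gmap_mem {t : ContTNorm} (T : TruthAlg t) {b z : ℝ} (hz : z ∈ T.carrier) :
    gmap b z ∈ T.carrier := by
  unfold gmap; split_ifs
  · exact T.one_mem
  · exact hz

lemma gmap_min {b x y : ℝ} (hx1 : x ≤ 1) (hy1 : y ≤ 1) :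
    min (gmap b x) (gmap b y) = gmap b (min x y) := by
  rcases le_total x y with h | h
  · rw [min_eq_left h]
    refine min_eq_left ?_
    unfold gmap
    split_ifs with h1 h2
    · exact le_rfl
    · exact absurd (h1.trans h) h2
    · exact hx1
    · exact h
  · rw [min_eq_right h]
    refine min_eq_right ?_
    unfold gmap
    split_ifs with h1 h2
    · exact le_rfl
    · exact absurd (h1.trans h) h2
    · exact hy1
    · exact h

lemma gmap_self_lt {b z : ℝ} (h : z < b) : gmap b z = z := by
  unfold gmap; rw [if_neg (not_le.2 h)]

lemma gmap_one_of_le {b z : ℝ} (h : b ≤ z) : gmap b z = 1 := by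
  unfold gmap; rw [if_pos h]

lemma gmap_imp {b x y : ℝ} (hb1 : b ≤ 1) (hy1 : y ≤ 1) :
    gmap b (if x ≤ y then 1 else y) = if gmap b x ≤ gmap b y then 1 else gmap b y := by
  rcases le_or_gt x y with h | h
  · rw [if_pos h]
    have hmono : gmap b x ≤ gmap b y := by
      rcases le_or_gt b x with h1 | h1
      · rw [gmap_one_of_le h1, gmap_one_of_le (h1.trans h)]
      · rw [gmap_self_lt h1]
        rcases le_or_gt b y with h2 | h2
        · rw [gmap_one_of_le h2]; exact h.trans hy1
        · rw [gmap_self_lt h2]; exact h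
    rw [if_pos hmono, gmap_one_of_le hb1]
  · rw [if_neg (not_le.2 h)]
    rcases le_or_gt b y with hby | hby
    · have hbx : b ≤ x := hby.trans h.le
      rw [gmap_one_of_le hby, gmap_one_of_le hbx, if_pos le_rfl]
    · rw [gmap_self_lt hby]
      have hgx : ¬ gmap b x ≤ y := by
        rcases le_or_gt b x with h1 | h1
        · rw [gmap_one_of_le h1]; exact not_le.2 (hby.trans_le hb1)
        · rw [gmap_self_lt h1]; exact not_le.2 h
      rw [if_neg hgx]

lemma gmap_valuation {t : ContTNorm} {T : TruthAlg t} {v : ℕ → ℝ}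
    (hv : IsValuation t T v) (b : ℝ) :
    IsValuation t T (fun i => gmap b (v i)) := fun i => gmap_mem T (hv i)

lemma eval_gmap (t : ContTNorm) (T : TruthAlg t)
    (hidem : ∀ x ∈ T.carrier, t.mul x x = x)
    {b : ℝ} (hb0 : 0 < b) (hb1 : b ≤ 1)
    {v : ℕ → ℝ} (hv : IsValuation t T v) (γ : Formula) :
    eval t (fun i => gmap b (v i)) γ = gmap b (eval t v γ) := by
  have hw := gmap_valuation hv b
  induction γ with
  | var i => rfl
  | bot =>
      show (0:ℝ) = gmap b 0
      unfold gmap; rw [if_neg (not_le.2 hb0)]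
  | conj a c iha ihc =>
      have ha := eval_mem t T hv a
      have hc := eval_mem t T hv c
      have hga := eval_mem t T hw a
      have hgc := eval_mem t T hw c
      show t.mul _ _ = gmap b (t.mul _ _)
      rw [iha, ihc]
      rw [idem_mul t (T.subset (gmap_mem T ha)) (T.subset (gmap_mem T hc))
            (hidem _ (gmap_mem T ha)),
          idem_mul t (T.subset ha) (T.subset hc) (hidem _ ha)]
      exact gmap_min (T.subset ha).2 (T.subset hc).2
  | impl a c iha ihc =>
      have ha := eval_mem t T hv a
      have hc := eval_mem t T hv c
      show resid t _ _ = gmap b (resid t _ _)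
      rw [iha, ihc]
      rw [resid_idem t (T.subset (gmap_mem T ha)) (T.subset (gmap_mem T hc))
            (hidem _ (gmap_mem T ha)),
          resid_idem t (T.subset ha) (T.subset hc) (hidem _ ha)]
      exact (gmap_imp hb1 (T.subset hc).2).symm

end Aux

/-- Theorem I: a real-valued logic satisfies P1 iff it extends Gödel logic. -/
theorem P1_iff_extends_Godel (t : ContTNorm) (T : TruthAlg t) :
    P1 (Taut t T) ↔ Taut minT (fullAlg minT) ⊆ Taut t T := by
  constructor
  · -- P1 → extends Gödel
    intro hP1
    -- Apply P1 to (t, T) itself with α = X₀, β = X₀ & X₀.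
    have hiff := (hP1 t T rfl (.var 0) (.conj (.var 0) (.var 0))).2
    have hhyp : ∀ v : ℕ → ℝ, IsValuation t T v →
        (eval t v (.var 0) = 1 ↔ eval t v (.conj (.var 0) (.var 0)) = 1) := by
      intro v hv
      have hxI := T.subset (hv 0)
      constructor
      · intro h1
        show t.mul (v 0) (v 0) = 1
        rw [show eval t v (.var 0) = v 0 from rfl] at h1
        rw [h1]
        exact t.one_mul' 1 mem1I
      · intro h1
        have h2 : t.mul (v 0) (v 0) ≤ v 0 := mul_le_left' t hxI hxI
        rw [show eval t v (.conj (.var 0) (.var 0)) = t.mul (v 0) (v 0) from rfl] at h1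
        rw [h1] at h2
        exact le_antisymm hxI.2 h2
    have hidemF : idemForm ∈ Taut t T := hiff hhyp
    have hidem := idem_of_taut t T hidemF
    intro γ hγ v hv
    rw [eval_eq_min t T hidem hv γ]
    exact hγ v (fun i => T.subset (hv i))
  · -- extends Gödel → P1
    intro hG
    intro t' T' hEq α β
    have hidemF : idemForm ∈ Taut t' T' := by
      rw [hEq]; exact hG idemForm_godel
    have hidem := idem_of_taut t' T' hidemF
    constructor
    · -- α ↔ β ∈ L implies truth-equivalence
      intro h v hv
      rw [← hEq] at h
      have he := h v hv
      have ha := eval_mem t' T' hv α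
      have hb := eval_mem t' T' hv β
      have haI := T'.subset ha
      have hbI := T'.subset hb
      simp only [Formula.iff, eval] at he
      have hr1 := resid_mem_I01 t' haI hbI
      have hr2 := resid_mem_I01 t' hbI haI
      obtain ⟨h1, h2⟩ := tnorm_mul_eq_one t' hr1 hr2 he
      have hab : eval t' v α = eval t' v β :=
        le_antisymm (le_of_resid_eq_one t' haI hbI.1 h1)
          (le_of_resid_eq_one t' hbI haI.1 h2)
      rw [hab]
    · -- truth-equivalence implies α ↔ β ∈ L
      intro h
      rw [← hEq]
      intro v hv
      have ha := eval_mem t' T' hv α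
      have hb := eval_mem t' T' hv β
      have haI := T'.subset ha
      have hbI := T'.subset hb
      -- first show eval α = eval β
      have key : ∀ (w : ℕ → ℝ), IsValuation t' T' w →
          ¬ (eval t' w α < eval t' w β) := by
        intro w hw hlt
        set b := eval t' w β with hbdef
        have haw := eval_mem t' T' hw α
        have hbw := eval_mem t' T' hw β
        have hb0 : 0 < b := lt_of_le_of_lt (T'.subset haw).1 hlt
        have hb1 : b ≤ 1 := (T'.subset hbw).2
        have hw' := gmap_valuation hw b
        have h1 : eval t' (fun i => gmap b (w i)) β = 1 := by
          rw [eval_gmap t' T' hidem hb0 hb1 hw β]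
          exact gmap_one_of_le le_rfl
        have h2 : eval t' (fun i => gmap b (w i)) α ≠ 1 := by
          rw [eval_gmap t' T' hidem hb0 hb1 hw α, gmap_self_lt hlt]
          exact ne_of_lt (lt_of_lt_of_le hlt hb1)
        exact h2 ((h _ hw').2 h1)
      have key2 : ∀ (w : ℕ → ℝ), IsValuation t' T' w →
          ¬ (eval t' w β < eval t' w α) := by
        intro w hw hlt
        set b := eval t' w α with hbdef
        have haw := eval_mem t' T' hw α
        have hbw := eval_mem t' T' hw β
        have hb0 : 0 < b := lt_of_le_of_lt (T'.subset hbw).1 hlt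
        have hb1 : b ≤ 1 := (T'.subset haw).2
        have hw' := gmap_valuation hw b
        have h1 : eval t' (fun i => gmap b (w i)) α = 1 := by
          rw [eval_gmap t' T' hidem hb0 hb1 hw α]
          exact gmap_one_of_le le_rfl
        have h2 : eval t' (fun i => gmap b (w i)) β ≠ 1 := by
          rw [eval_gmap t' T' hidem hb0 hb1 hw β, gmap_self_lt hlt]
          exact ne_of_lt (lt_of_lt_of_le hlt hb1)
        exact h2 ((h _ hw').1 h1)
      have hab : eval t' v α = eval t' v β :=
        le_antisymm (not_lt.1 (key2 v hv)) (not_lt.1 (key v hv))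
      show t'.mul (resid t' (eval t' v α) (eval t' v β))
          (resid t' (eval t' v β) (eval t' v α)) = 1
      rw [hab, resid_eq_one_of_le t' hbI hbI le_rfl]
      exact t'.one_mul' 1 mem1I

end
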